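/- arXiv:2105.03601 — 2 statements merged into one kernel-verified Lean document; each statement's English description precedes it below -/
import Mathlib

section
/- With the Harper-type parameters below, fix 0 < k < 1/2. There is an absolute constant C such that for every large X, every odd prime p, and every 1 ≤ i ≤ 𝓘, one has 𝓝_i(p, 2k−1)^{2(2−3k)/(1−2k)} · 𝓝_i(p, 2−2k)^2 ≤ 𝓝_i(p, 2k) · (1 + C·e^{−e²k α_i^{−3/4}}) + 𝓠_i(p, k)^{r_k}, where r_k = 3 + ⌈2(2−3k)/(1−2k)⌉. -/
open Filter Finset

set_option maxHeartbeats 4000000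

section NBaux


lemma hasSum_exp_real (x : ℝ) : HasSum (fun j : ℕ => x ^ j / j.factorial) (Real.exp x) := by
  rw [Real.exp_eq_exp_ℝ]
  exact NormedSpace.expSeries_div_hasSum_exp x

lemma exp_remainder (x : ℝ) (n : ℕ) :
    |Real.exp x - ∑ j ∈ Finset.range n, x ^ j / (j.factorial : ℝ)| ≤
      |x| ^ n / (n.factorial : ℝ) * Real.exp |x| := by
  have hs := (hasSum_exp_real x).summable
  have habs := (hasSum_exp_real |x|).summable
  have htail : Summable (fun j : ℕ => |x| ^ (j + n) / ((j + n).factorial : ℝ)) := by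
    have := (summable_nat_add_iff (f := fun j : ℕ => |x| ^ j / (j.factorial : ℝ)) n).2 habs
    exact this
  have h1 : Real.exp x - ∑ j ∈ Finset.range n, x ^ j / (j.factorial : ℝ) =
      ∑' j : ℕ, x ^ (j + n) / ((j + n).factorial : ℝ) := by
    have h2 := Summable.sum_add_tsum_nat_add n hs
    rw [(hasSum_exp_real x).tsum_eq] at h2
    linarith
  rw [h1]
  have hterm : ∀ j : ℕ, |x| ^ (j + n) / ((j + n).factorial : ℝ) ≤
      |x| ^ n / (n.factorial : ℝ) * (|x| ^ j / (j.factorial : ℝ)) := by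
    intro j
    have hfac : (n.factorial * j.factorial : ℝ) ≤ ((j + n).factorial : ℝ) := by
      have := Nat.factorial_mul_factorial_dvd_factorial_add n j
      have h3 := Nat.le_of_dvd (Nat.factorial_pos (n + j)) this
      have : ((n.factorial * j.factorial : ℕ) : ℝ) ≤ ((n + j).factorial : ℝ) := by
        exact_mod_cast h3
      rw [add_comm j n]
      simpa using this
    rw [pow_add, mul_comm (|x| ^ j), div_mul_div_comm]
    gcongr
  calc |∑' j : ℕ, x ^ (j + n) / ((j + n).factorial : ℝ)|
      ≤ ∑' j : ℕ, |x| ^ (j + n) / ((j + n).factorial : ℝ) := by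
        have hf : Summable fun j : ℕ => ‖x ^ (j + n) / ((j + n).factorial : ℝ)‖ :=
          htail.congr fun j => by
            rw [Real.norm_eq_abs, abs_div, abs_pow, Nat.abs_cast]
        simpa [Real.norm_eq_abs, abs_div, abs_pow] using norm_tsum_le_tsum_norm hf
    _ ≤ ∑' j : ℕ, |x| ^ n / (n.factorial : ℝ) * (|x| ^ j / (j.factorial : ℝ)) := by
        apply Summable.tsum_le_tsum hterm htail (habs.mul_left _)
    _ = |x| ^ n / (n.factorial : ℝ) * Real.exp |x| := by
        rw [tsum_mul_left, (hasSum_exp_real |x|).tsum_eq]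

lemma pow_le_exp_mul_factorial (n : ℕ) : ((n : ℝ)) ^ n ≤ Real.exp n * n.factorial := by
  have h1 : (n : ℝ) ^ n / (n.factorial : ℝ) ≤ Real.exp n := by
    calc (n : ℝ) ^ n / (n.factorial : ℝ)
        ≤ ∑ j ∈ Finset.range (n + 1), (n : ℝ) ^ j / (j.factorial : ℝ) :=
          Finset.single_le_sum (f := fun j : ℕ => (n : ℝ) ^ j / (j.factorial : ℝ))
            (fun j _ => by positivity) (Finset.self_mem_range_succ n)
      _ ≤ Real.exp n := Real.sum_le_exp_of_nonneg (Nat.cast_nonneg n) _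
  have hf : (0 : ℝ) < (n.factorial : ℝ) := by exact_mod_cast n.factorial_pos
  calc ((n : ℝ)) ^ n = (n : ℝ) ^ n / (n.factorial : ℝ) * n.factorial := by field_simp
    _ ≤ Real.exp n * n.factorial := by
        apply mul_le_mul_of_nonneg_right h1 hf.le

lemma pow_div_factorial_le (n : ℕ) (hn : 0 < n) {x : ℝ} (hx : 0 ≤ x) :
    x ^ n / (n.factorial : ℝ) ≤ (Real.exp 1 * x / n) ^ n := by
  have hf : (0 : ℝ) < (n.factorial : ℝ) := by exact_mod_cast n.factorial_pos
  have hn' : (0 : ℝ) < (n : ℝ) := by exact_mod_cast hn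
  have h2 : (Real.exp 1 * x / n) ^ n = Real.exp n * x ^ n / (n : ℝ) ^ n := by
    rw [div_pow, mul_pow, Real.exp_one_pow]
  rw [h2, div_le_div_iff₀ hf (by positivity)]
  have h3 := pow_le_exp_mul_factorial n
  calc x ^ n * (n : ℝ) ^ n ≤ x ^ n * (Real.exp n * n.factorial) := by
        apply mul_le_mul_of_nonneg_left h3 (by positivity)
    _ = Real.exp n * x ^ n * n.factorial := by ring

lemma exp_sq_lt_eight : Real.exp 1 * Real.exp 1 < 8 := by
  nlinarith [Real.exp_one_lt_d9, Real.exp_pos 1]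

/-- If `|x| ≤ n/8`, the degree-`< n` Taylor sum of `exp` has relative error `≤ e^{-3n/4}`. -/
lemma exp_approx (n : ℕ) (x : ℝ) (hx : |x| ≤ (n : ℝ) / 8) :
    |Real.exp x - ∑ j ∈ Finset.range n, x ^ j / (j.factorial : ℝ)| ≤
      Real.exp (-(3 * (n : ℝ) / 4)) * Real.exp x := by
  rcases Nat.eq_zero_or_pos n with hn | hn
  · subst hn
    simp only [Nat.cast_zero] at hx ⊢
    have hx0 : x = 0 := by
      have := abs_nonneg x; have : |x| = 0 := le_antisymm (by linarith [hx]) (abs_nonneg x)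
      exact abs_eq_zero.1 this
    subst hx0
    simp [Real.exp_zero]
  · have hxx := abs_le.1 hx
    have hn' : (0 : ℝ) < (n : ℝ) := by exact_mod_cast hn
    calc |Real.exp x - ∑ j ∈ Finset.range n, x ^ j / (j.factorial : ℝ)|
        ≤ |x| ^ n / (n.factorial : ℝ) * Real.exp |x| := exp_remainder x n
      _ ≤ (Real.exp 1 * |x| / n) ^ n * Real.exp |x| := by
          apply mul_le_mul_of_nonneg_right (pow_div_factorial_le n hn (abs_nonneg x))
            (Real.exp_nonneg _)
      _ ≤ Real.exp (-1) ^ n * Real.exp |x| := by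
          apply mul_le_mul_of_nonneg_right _ (Real.exp_nonneg _)
          apply pow_le_pow_left₀ (by positivity)
          rw [div_le_iff₀ hn']
          have h8 : Real.exp 1 * |x| ≤ Real.exp 1 * ((n : ℝ) / 8) :=
            mul_le_mul_of_nonneg_left hx (Real.exp_nonneg 1)
          have h9 : Real.exp 1 * ((n : ℝ) / 8) ≤ Real.exp (-1) * (n : ℝ) := by
            rw [Real.exp_neg, inv_mul_eq_div, le_div_iff₀ (Real.exp_pos 1)]
            nlinarith [exp_sq_lt_eight, Real.exp_pos 1, hn']
          linarith
      _ = Real.exp (|x| - n) := by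
          rw [← Real.exp_nat_mul, ← Real.exp_add]; ring_nf
      _ ≤ Real.exp (-(3 * (n : ℝ) / 4)) * Real.exp x := by
          rw [← Real.exp_add]
          apply Real.exp_le_exp.2
          linarith [hxx.1, hxx.2]

lemma exp_le_one_add_two_mul {t : ℝ} (h0 : 0 ≤ t) (h1 : t ≤ 1 / 2) :
    Real.exp t ≤ 1 + 2 * t := by
  have h2 := Real.add_one_le_exp (-t)
  rw [Real.exp_neg] at h2
  have hp := Real.exp_pos t
  have h3 : Real.exp t * (1 - t) ≤ 1 := by
    have := mul_le_mul_of_nonneg_left h2 hp.le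
    rw [mul_inv_cancel₀ hp.ne'] at this
    linarith [this]
  nlinarith [h3, hp]

/-- Terms of the exponential series are monotone up to `v` when `v ≥ N`. -/
lemma term_mono {v : ℝ} (N : ℕ) (hv : (N : ℝ) ≤ v) (hv0 : 0 ≤ v) :
    ∀ m, m ≤ N → ∀ j, j ≤ m → v ^ j / (j.factorial : ℝ) ≤ v ^ m / (m.factorial : ℝ) := by
  intro m
  induction m with
  | zero => intro _ j hj; interval_cases j; exact le_refl _
  | succ m ih =>
    intro hmN j hj
    rcases Nat.eq_or_lt_of_le hj with h | h
    · subst h; exact le_refl _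
    · have hj' : j ≤ m := by omega
      refine (ih (by omega) j hj').trans ?_
      have hm1 : ((m : ℝ) + 1) ≤ v := by
        have : ((m + 1 : ℕ) : ℝ) ≤ (N : ℝ) := by exact_mod_cast hmN
        push_cast at this; linarith
      have hfm : (0 : ℝ) < (m.factorial : ℝ) := by exact_mod_cast m.factorial_pos
      rw [Nat.factorial_succ, pow_succ]
      rw [div_le_div_iff₀ hfm (by positivity)]
      have hvm : (0 : ℝ) ≤ v ^ m := pow_nonneg hv0 m
      push_cast
      have hkey := mul_le_mul_of_nonneg_left hm1 (mul_nonneg hvm hfm.le)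
      nlinarith [hkey]

lemma sum_terms_le (N : ℕ) {v : ℝ} (hv : (N : ℝ) ≤ v) :
    ∑ j ∈ Finset.range (N + 1), v ^ j / (j.factorial : ℝ) ≤
      ((N : ℝ) + 1) * (v ^ N / (N.factorial : ℝ)) := by
  have hv0 : 0 ≤ v := le_trans (Nat.cast_nonneg N) hv
  calc ∑ j ∈ Finset.range (N + 1), v ^ j / (j.factorial : ℝ)
      ≤ ∑ _j ∈ Finset.range (N + 1), v ^ N / (N.factorial : ℝ) := by
        apply Finset.sum_le_sum
        intro j hj
        exact term_mono N hv hv0 N le_rfl j (by simpa [Nat.lt_succ_iff] using hj)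
    _ = ((N : ℝ) + 1) * (v ^ N / (N.factorial : ℝ)) := by
        rw [Finset.sum_const, Finset.card_range]
        push_cast; ring

lemma core_ineq (k c : ℝ) (hk0 : 0 < k) (hk : k < 1 / 2)
    (hcdef : c = 2 * (2 - 3 * k) / (1 - 2 * k))
    (L : ℝ) (hL100 : (100 : ℝ) ≤ L) (hLc : c + 3 ≤ L)
    (P : ℝ) (ℓ : ℕ) (hl : L ≤ (ℓ : ℝ)) :
    (∑ j ∈ Finset.range (2 * ℓ + 1), ((2 * k - 1) * P) ^ j / (j.factorial : ℝ)) ^ c *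
        (∑ j ∈ Finset.range (2 * ℓ + 1), ((2 - 2 * k) * P) ^ j / (j.factorial : ℝ)) ^ (2 : ℕ) ≤
      (∑ j ∈ Finset.range (2 * ℓ + 1), (2 * k * P) ^ j / (j.factorial : ℝ)) *
          (1 + 2 * (c + 3) * Real.exp (-L)) +
        ((12 * max 9 (36 * k ^ 2) * P / (ℓ : ℝ)) ^ (2 * ℓ)) ^ (3 + ⌈c⌉₊) := by
  have h12 : (0 : ℝ) < 1 - 2 * k := by linarith
  have hc0 : 0 < c := by rw [hcdef]; apply div_pos (by linarith) h12
  set n : ℕ := 2 * ℓ + 1 with hndef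
  set SS : ℝ → ℝ := fun x => ∑ j ∈ Finset.range n, x ^ j / (j.factorial : ℝ) with hSSdef
  have hLpos : (0 : ℝ) < L := by linarith
  have hlpos : (0 : ℝ) < (ℓ : ℝ) := by linarith
  have hln : (2 * (ℓ : ℝ)) + 1 = (n : ℝ) := by rw [hndef]; push_cast; ring
  have habs1 : |2 * k - 1| ≤ 2 := by rw [abs_le]; constructor <;> linarith
  have habs2 : |2 - 2 * k| ≤ 2 := by rw [abs_le]; constructor <;> linarith
  have habs3 : |2 * k| ≤ 2 := by rw [abs_le]; constructor <;> linarith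
  have hQ0 : (0 : ℝ) ≤ (12 * max 9 (36 * k ^ 2) * P / (ℓ : ℝ)) ^ (2 * ℓ) :=
    (even_two_mul ℓ).pow_nonneg _
  have hQr0 : (0 : ℝ) ≤ ((12 * max 9 (36 * k ^ 2) * P / (ℓ : ℝ)) ^ (2 * ℓ)) ^ (3 + ⌈c⌉₊) :=
    pow_nonneg hQ0 _
  rcases le_or_gt |P| ((ℓ : ℝ) / 8) with hPs | hPb
  · -- small P case
    set ε : ℝ := Real.exp (-(3 * (n : ℝ) / 4)) with hεdef
    have hε0 : 0 < ε := Real.exp_pos _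
    have happrox : ∀ a : ℝ, |a| ≤ 2 →
        |Real.exp (a * P) - SS (a * P)| ≤ ε * Real.exp (a * P) := by
      intro a ha
      apply exp_approx n (a * P)
      have h1 : |a * P| ≤ 2 * ((ℓ : ℝ) / 8) := by
        rw [abs_mul]
        exact mul_le_mul ha hPs (abs_nonneg P) (by norm_num)
      have h2 : (2 * (ℓ : ℝ)) / 8 ≤ (n : ℝ) / 8 := by
        rw [← hln]; linarith
      linarith
    have hub : ∀ a : ℝ, |a| ≤ 2 → SS (a * P) ≤ Real.exp (a * P) * (1 + ε) := by
      intro a ha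
      have h := abs_le.1 (happrox a ha)
      nlinarith [h.1, h.2]
    have hlb : ∀ a : ℝ, |a| ≤ 2 → Real.exp (a * P) * (1 - ε) ≤ SS (a * P) := by
      intro a ha
      have h := abs_le.1 (happrox a ha)
      nlinarith [h.1, h.2]
    have hεL32 : ε ≤ Real.exp (-(3 / 2) * L) := by
      apply Real.exp_le_exp.2
      have : 2 * L ≤ (n : ℝ) := by rw [← hln]; linarith
      linarith
    have hεL : ε ≤ Real.exp (-L) := by
      refine hεL32.trans (Real.exp_le_exp.2 (by linarith))
    have hεhalf : (c + 3) * ε ≤ 1 / 2 := by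
      have hLexp : 2 * L ≤ Real.exp ((3 / 2) * L) := by
        have h1 := Real.add_one_le_exp ((3 / 4) * L)
        have h2 : Real.exp ((3 / 2) * L) = Real.exp ((3 / 4) * L) * Real.exp ((3 / 4) * L) := by
          rw [← Real.exp_add]; ring_nf
        nlinarith [h1, hL100]
      have h3 : Real.exp ((3 / 2) * L) * Real.exp (-(3 / 2) * L) = 1 := by
        rw [← Real.exp_add]; norm_num
      have h4 : (c + 3) * ε ≤ L * Real.exp (-(3 / 2) * L) := by
        apply mul_le_mul hLc hεL32 hε0.le (by linarith)
      have h5 : L * Real.exp (-(3 / 2) * L) ≤ 1 / 2 := by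
        have h6 : (0 : ℝ) < Real.exp (-(3 / 2) * L) := Real.exp_pos _
        have h7 := mul_le_mul_of_nonneg_right hLexp h6.le
        rw [h3] at h7
        linarith
      linarith
    have hε1 : ε ≤ 1 / 6 := by nlinarith [hεhalf, mul_nonneg hc0.le hε0.le]
    have hpos1 : (0 : ℝ) ≤ SS ((2 * k - 1) * P) := by
      refine le_trans ?_ (hlb _ habs1)
      have := Real.exp_pos ((2 * k - 1) * P)
      nlinarith
    have hpos2 : (0 : ℝ) ≤ SS ((2 - 2 * k) * P) := by
      refine le_trans ?_ (hlb _ habs2)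
      have := Real.exp_pos ((2 - 2 * k) * P)
      nlinarith
    have hCE0 : (0 : ℝ) ≤ 1 + 2 * (c + 3) * Real.exp (-L) := by positivity
    have key : (1 + ε) ^ c * (1 + ε) ^ (2 : ℕ) ≤ (1 - ε) * (1 + 2 * (c + 3) * Real.exp (-L)) := by
      have h1 : (1 + ε) ^ c ≤ Real.exp (ε * c) := by
        rw [Real.exp_mul]
        exact Real.rpow_le_rpow (by linarith) (by linarith [Real.add_one_le_exp ε]) hc0.le
      have h2 : (1 + ε) ^ (2 : ℕ) ≤ Real.exp (ε * 2) := by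
        have := pow_le_pow_left₀ (by linarith : (0:ℝ) ≤ 1 + ε)
          (by linarith [Real.add_one_le_exp ε] : 1 + ε ≤ Real.exp ε) 2
        calc (1 + ε) ^ (2:ℕ) ≤ Real.exp ε ^ (2:ℕ) := this
          _ = Real.exp (ε * 2) := by rw [← Real.exp_nat_mul]; ring_nf
      have h3 : (1 + ε) ^ c * (1 + ε) ^ (2 : ℕ) ≤ Real.exp ((c + 2) * ε) := by
        calc (1 + ε) ^ c * (1 + ε) ^ (2 : ℕ) ≤ Real.exp (ε * c) * Real.exp (ε * 2) := by
              apply mul_le_mul h1 h2 (by positivity) (Real.exp_nonneg _)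
          _ = Real.exp ((c + 2) * ε) := by rw [← Real.exp_add]; ring_nf
      have h4 : Real.exp ((c + 2) * ε) ≤ 1 + 2 * ((c + 2) * ε) := by
        apply exp_le_one_add_two_mul (by positivity)
        nlinarith [hεhalf, hε0]
      set E := Real.exp (-L) with hEdef
      have hE0 : 0 < E := Real.exp_pos _
      have h5 : 2 * (c + 3) * ε * E ≤ E := by
        nlinarith [hεhalf, hE0]
      have h6 : (2 * c + 5) * ε ≤ (2 * c + 5) * E := by
        apply mul_le_mul_of_nonneg_left hεL (by linarith)
      nlinarith [h3, h4, h5, h6, hε0, hE0]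
    calc SS ((2 * k - 1) * P) ^ c * SS ((2 - 2 * k) * P) ^ (2 : ℕ)
        ≤ (Real.exp ((2 * k - 1) * P) * (1 + ε)) ^ c *
            (Real.exp ((2 - 2 * k) * P) * (1 + ε)) ^ (2 : ℕ) := by
          apply mul_le_mul
          · exact Real.rpow_le_rpow hpos1 (hub _ habs1) hc0.le
          · exact pow_le_pow_left₀ hpos2 (hub _ habs2) 2
          · exact pow_nonneg hpos2 2
          · exact Real.rpow_nonneg (by positivity) c
      _ = Real.exp (2 * k * P) * ((1 + ε) ^ c * (1 + ε) ^ (2 : ℕ)) := by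
          rw [Real.mul_rpow (Real.exp_nonneg _) (by linarith), mul_pow, ← Real.exp_mul,
            ← Real.exp_nat_mul]
          have hid : (2 * k - 1) * P * c + (2 : ℕ) * ((2 - 2 * k) * P) = 2 * k * P := by
            rw [hcdef]; push_cast; field_simp; ring
          calc Real.exp ((2 * k - 1) * P * c) * (1 + ε) ^ c *
                (Real.exp ((2 : ℕ) * ((2 - 2 * k) * P)) * (1 + ε) ^ (2 : ℕ))
              = Real.exp ((2 * k - 1) * P * c) * Real.exp ((2 : ℕ) * ((2 - 2 * k) * P)) *
                ((1 + ε) ^ c * (1 + ε) ^ (2 : ℕ)) := by ring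
            _ = Real.exp (2 * k * P) * ((1 + ε) ^ c * (1 + ε) ^ (2 : ℕ)) := by
                rw [← Real.exp_add, hid]
      _ ≤ Real.exp (2 * k * P) * ((1 - ε) * (1 + 2 * (c + 3) * Real.exp (-L))) := by
          apply mul_le_mul_of_nonneg_left key (Real.exp_nonneg _)
      _ = Real.exp (2 * k * P) * (1 - ε) * (1 + 2 * (c + 3) * Real.exp (-L)) := by ring
      _ ≤ SS (2 * k * P) * (1 + 2 * (c + 3) * Real.exp (-L)) := by
          apply mul_le_mul_of_nonneg_right (hlb _ habs3) hCE0
      _ ≤ SS (2 * k * P) * (1 + 2 * (c + 3) * Real.exp (-L)) +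
            ((12 * max 9 (36 * k ^ 2) * P / (ℓ : ℝ)) ^ (2 * ℓ)) ^ (3 + ⌈c⌉₊) := by
          linarith [hQr0]
  · -- large P case
    have hl100 : (100 : ℝ) ≤ (ℓ : ℝ) := le_trans hL100 hl
    have hlc : c + 3 ≤ (ℓ : ℝ) := le_trans hLc hl
    have hP0 : (0 : ℝ) < |P| := by linarith
    have hl0 : 0 < 2 * ℓ := by
      have : (1 : ℝ) ≤ (ℓ : ℝ) := by linarith
      have : 1 ≤ ℓ := by exact_mod_cast this
      omega
    set D : ℝ := 12 * max 9 (36 * k ^ 2) with hDdef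
    have hD : (108 : ℝ) ≤ D := by
      have : (9 : ℝ) ≤ max 9 (36 * k ^ 2) := le_max_left _ _
      rw [hDdef]; linarith
    set Q : ℝ := (D * P / (ℓ : ℝ)) ^ (2 * ℓ) with hQdef
    have hQabs : Q = (D * |P| / (ℓ : ℝ)) ^ (2 * ℓ) := by
      rw [hQdef, ← (even_two_mul ℓ).pow_abs (D * P / (ℓ : ℝ))]
      congr 1
      rw [abs_div, abs_mul, abs_of_nonneg (by linarith : (0:ℝ) ≤ D),
        abs_of_nonneg hlpos.le]
    set B : ℝ := (2 * (ℓ : ℝ) + 1) * (8 * Real.exp 1 * |P| / (ℓ : ℝ)) ^ (2 * ℓ) with hBdef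
    have hbase_e : Real.exp 1 ≤ 8 * Real.exp 1 * |P| / (ℓ : ℝ) := by
      rw [le_div_iff₀ hlpos]
      nlinarith [Real.exp_pos 1, hPb]
    have hexp1 : (1 : ℝ) ≤ Real.exp 1 := by linarith [Real.add_one_le_exp (1:ℝ)]
    have hbase1 : (1 : ℝ) ≤ 8 * Real.exp 1 * |P| / (ℓ : ℝ) := le_trans hexp1 hbase_e
    have hB1 : (1 : ℝ) ≤ B := by
      rw [hBdef]
      have h1 : (1 : ℝ) ≤ (8 * Real.exp 1 * |P| / (ℓ : ℝ)) ^ (2 * ℓ) := one_le_pow₀ hbase1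
      have h2 := le_mul_of_one_le_left (le_trans zero_le_one h1)
        (by linarith : (1:ℝ) ≤ 2 * (ℓ : ℝ) + 1)
      linarith
    have hB0 : (0 : ℝ) < B := by linarith
    -- |SS (a*P)| ≤ B for |a| ≤ 2
    have hSSB : ∀ a : ℝ, |a| ≤ 2 → |SS (a * P)| ≤ B := by
      intro a ha
      set v : ℝ := max (2 * |P|) (2 * (ℓ : ℝ)) with hvdef
      have hv2l : (2 * (ℓ : ℝ)) ≤ v := le_max_right _ _
      have hv0 : (0 : ℝ) ≤ v := le_trans (by positivity) hv2l
      have hvN : ((2 * ℓ : ℕ) : ℝ) ≤ v := by push_cast; linarith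
      have hv16 : v ≤ 16 * |P| := by
        apply max_le <;> nlinarith [hPb]
      have step1 : |SS (a * P)| ≤ ∑ j ∈ Finset.range n, v ^ j / (j.factorial : ℝ) := by
        rw [hSSdef]
        refine (Finset.abs_sum_le_sum_abs _ _).trans (Finset.sum_le_sum ?_)
        intro j hj
        rw [abs_div, abs_pow, Nat.abs_cast]
        have hav : |a * P| ≤ v := by
          rw [abs_mul]
          have h1 : |a| * |P| ≤ 2 * |P| := mul_le_mul_of_nonneg_right ha (abs_nonneg P)
          have h2v : 2 * |P| ≤ v := le_max_left _ _
          linarith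
        gcongr
      have step2 : ∑ j ∈ Finset.range n, v ^ j / (j.factorial : ℝ) ≤
          (2 * (ℓ : ℝ) + 1) * (v ^ (2 * ℓ) / ((2 * ℓ).factorial : ℝ)) := by
        have h := sum_terms_le (2 * ℓ) hvN
        rw [hndef]
        refine h.trans (le_of_eq ?_)
        push_cast; ring
      have step3 : v ^ (2 * ℓ) / ((2 * ℓ).factorial : ℝ) ≤
          (Real.exp 1 * v / ((2 * ℓ : ℕ) : ℝ)) ^ (2 * ℓ) := pow_div_factorial_le (2 * ℓ) hl0 hv0
      have step4 : (Real.exp 1 * v / ((2 * ℓ : ℕ) : ℝ)) ^ (2 * ℓ) ≤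
          (8 * Real.exp 1 * |P| / (ℓ : ℝ)) ^ (2 * ℓ) := by
        apply pow_le_pow_left₀ (by positivity)
        have h2l : (0:ℝ) < ((2 * ℓ : ℕ) : ℝ) := by push_cast; linarith
        rw [div_le_div_iff₀ h2l hlpos]
        push_cast
        have hh : Real.exp 1 * v ≤ Real.exp 1 * (16 * |P|) :=
          mul_le_mul_of_nonneg_left hv16 (Real.exp_pos 1).le
        have hh2 := mul_le_mul_of_nonneg_right hh hlpos.le
        nlinarith [hh2]
      have step5 : (2 * (ℓ : ℝ) + 1) * (v ^ (2 * ℓ) / ((2 * ℓ).factorial : ℝ)) ≤ B := by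
        rw [hBdef]
        apply mul_le_mul_of_nonneg_left (step3.trans step4) (by linarith)
      linarith [step1, step2, step5,
        mul_le_mul_of_nonneg_left (step3.trans step4) (by linarith : (0:ℝ) ≤ 2 * (ℓ:ℝ) + 1)]
    -- B ≤ Q
    have hBQ : B ≤ Q := by
      rw [hQabs, hBdef]
      have h1 : (8 * Real.exp 1 * |P| / (ℓ : ℝ)) ^ (2 * ℓ) =
          (8 * Real.exp 1) ^ (2 * ℓ) * (|P| / (ℓ : ℝ)) ^ (2 * ℓ) := by
        rw [← mul_pow, mul_div_assoc]
      have h2 : (D * |P| / (ℓ : ℝ)) ^ (2 * ℓ) = D ^ (2 * ℓ) * (|P| / (ℓ : ℝ)) ^ (2 * ℓ) := by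
        rw [← mul_pow, mul_div_assoc]
      rw [h1, h2, ← mul_assoc]
      apply mul_le_mul_of_nonneg_right _ (by positivity)
      have h3 : (2 * (ℓ : ℝ) + 1) ≤ 4 ^ (2 * ℓ) := by
        have h4 : 2 * ℓ + 1 < 2 ^ (2 * ℓ + 1) := Nat.lt_two_pow_self
        have h5 : (2 : ℕ) ^ (2 * ℓ + 1) ≤ 4 ^ (2 * ℓ) := by
          have e1 : (4 : ℕ) ^ (2 * ℓ) = 2 ^ (4 * ℓ) := by
            rw [show (4:ℕ) = 2^2 by norm_num, ← pow_mul]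
            congr 1; ring
          rw [e1]
          apply Nat.pow_le_pow_right (by norm_num)
          have hl1 : 1 ≤ ℓ := by exact_mod_cast (by linarith : (1:ℝ) ≤ (ℓ:ℝ))
          omega
        have h6 : 2 * ℓ + 1 ≤ 4 ^ (2 * ℓ) := by omega
        calc (2 * (ℓ : ℝ) + 1) = ((2 * ℓ + 1 : ℕ) : ℝ) := by push_cast; ring
          _ ≤ ((4 ^ (2 * ℓ) : ℕ) : ℝ) := by exact_mod_cast h6
          _ = 4 ^ (2 * ℓ) := by push_cast; ring
      have h6 : (8 * Real.exp 1) ≤ 27 := by linarith [Real.exp_one_lt_d9]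
      calc (2 * (ℓ : ℝ) + 1) * (8 * Real.exp 1) ^ (2 * ℓ)
          ≤ 4 ^ (2 * ℓ) * (8 * Real.exp 1) ^ (2 * ℓ) :=
            mul_le_mul_of_nonneg_right h3 (by positivity)
        _ ≤ 4 ^ (2 * ℓ) * 27 ^ (2 * ℓ) := by
            apply mul_le_mul_of_nonneg_left (pow_le_pow_left₀ (by positivity) h6 _) (by positivity)
        _ = 108 ^ (2 * ℓ) := by rw [← mul_pow]; norm_num
        _ ≤ D ^ (2 * ℓ) := pow_le_pow_left₀ (by norm_num) hD _
    have hQ1 : (1 : ℝ) ≤ Q := by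
      rw [hQabs]
      apply one_le_pow₀
      rw [le_div_iff₀ hlpos]
      have hmm := mul_le_mul hD hPb.le (by positivity : (0:ℝ) ≤ (ℓ:ℝ)/8) (by linarith : (0:ℝ) ≤ D)
      linarith [hmm]
    have hB2C : 2 + 2 * (c + 3) ≤ B := by
      have h1 : (Real.exp 1) ^ (2 * ℓ) ≤ (8 * Real.exp 1 * |P| / (ℓ : ℝ)) ^ (2 * ℓ) :=
        pow_le_pow_left₀ (Real.exp_nonneg 1) hbase_e _
      have h2 : Real.exp ((2 * ℓ : ℕ) : ℝ) = (Real.exp 1) ^ (2 * ℓ) := (Real.exp_one_pow _).symm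
      have h4 : Real.exp ((2 * ℓ : ℕ) : ℝ) = Real.exp (ℓ : ℝ) * Real.exp (ℓ : ℝ) := by
        rw [← Real.exp_add]; congr 1; push_cast; ring
      have h5 := Real.add_one_le_exp ((ℓ : ℝ))
      have h6 : 2 + 2 * (c + 3) ≤ Real.exp ((2 * ℓ : ℕ) : ℝ) := by
        rw [h4]; nlinarith [h5, hl100, hlc]
      have h7 : Real.exp ((2 * ℓ : ℕ) : ℝ) ≤ (8 * Real.exp 1 * |P| / (ℓ : ℝ)) ^ (2 * ℓ) := by
        rw [h2]; exact h1
      rw [hBdef]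
      nlinarith [h6, h7, hl100,
        pow_nonneg (by positivity : (0:ℝ) ≤ 8 * Real.exp 1 * |P| / (ℓ : ℝ)) (2 * ℓ)]
    have hr : c + 3 ≤ ((3 + ⌈c⌉₊ : ℕ) : ℝ) := by
      have h := Nat.le_ceil c
      push_cast
      linarith [h]
    have hchain : B ^ (c + 2) + (1 + 2 * (c + 3)) * B ≤ Q ^ (3 + ⌈c⌉₊) := by
      have m1 : B ≤ B ^ (c + 2) := by
        calc B = B ^ (1 : ℝ) := (Real.rpow_one B).symm
          _ ≤ B ^ (c + 2) := Real.rpow_le_rpow_of_exponent_le hB1 (by linarith)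
      have m2 : B ^ (c + 2) + (1 + 2 * (c + 3)) * B ≤ (2 + 2 * (c + 3)) * B ^ (c + 2) := by
        have := mul_le_mul_of_nonneg_left m1 (by linarith : (0:ℝ) ≤ 1 + 2 * (c + 3))
        linarith
      have m3 : (2 + 2 * (c + 3)) * B ^ (c + 2) ≤ B * B ^ (c + 2) :=
        mul_le_mul_of_nonneg_right hB2C (Real.rpow_nonneg hB0.le _)
      have m4 : B ^ (c + 3) = B * B ^ (c + 2) := by
        rw [show c + 3 = 1 + (c + 2) by ring, Real.rpow_add hB0, Real.rpow_one]
      have m5 : B ^ (c + 3) ≤ Q ^ (c + 3) := Real.rpow_le_rpow hB0.le hBQ (by linarith)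
      have m6 : Q ^ (c + 3) ≤ Q ^ (((3 + ⌈c⌉₊ : ℕ)) : ℝ) :=
        Real.rpow_le_rpow_of_exponent_le hQ1 hr
      have m7 : Q ^ (((3 + ⌈c⌉₊ : ℕ)) : ℝ) = Q ^ (3 + ⌈c⌉₊ : ℕ) := Real.rpow_natCast Q _
      rw [← m7]
      linarith [m2, m3, m5, m6, m4.le, m4.ge]

    have hL1 : SS ((2 * k - 1) * P) ^ c ≤ B ^ c := by
      calc SS ((2 * k - 1) * P) ^ c ≤ |SS ((2 * k - 1) * P) ^ c| := le_abs_self _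
        _ ≤ |SS ((2 * k - 1) * P)| ^ c := Real.abs_rpow_le_abs_rpow _ _
        _ ≤ B ^ c := Real.rpow_le_rpow (abs_nonneg _) (hSSB _ habs1) hc0.le
    have hL2 : SS ((2 - 2 * k) * P) ^ (2 : ℕ) ≤ B ^ (2 : ℕ) := by
      calc SS ((2 - 2 * k) * P) ^ (2 : ℕ) = |SS ((2 - 2 * k) * P)| ^ (2 : ℕ) := (sq_abs _).symm
        _ ≤ B ^ (2 : ℕ) := pow_le_pow_left₀ (abs_nonneg _) (hSSB _ habs2) 2
    have hLHS : SS ((2 * k - 1) * P) ^ c * SS ((2 - 2 * k) * P) ^ (2 : ℕ) ≤ B ^ (c + 2) := by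
      have hmm := mul_le_mul hL1 hL2 (by positivity) (Real.rpow_nonneg hB0.le c)
      calc SS ((2 * k - 1) * P) ^ c * SS ((2 - 2 * k) * P) ^ (2 : ℕ)
          ≤ B ^ c * B ^ (2 : ℕ) := hmm
        _ = B ^ (c + 2) := by
            rw [← Real.rpow_natCast B 2, ← Real.rpow_add hB0]
            norm_num
    have hRHS1 : -((1 + 2 * (c + 3)) * B) ≤
        SS (2 * k * P) * (1 + 2 * (c + 3) * Real.exp (-L)) := by
      have hE1 : Real.exp (-L) ≤ 1 := by
        rw [← Real.exp_zero]
        exact Real.exp_le_exp.2 (by linarith)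
      have h1 : |SS (2 * k * P) * (1 + 2 * (c + 3) * Real.exp (-L))| ≤
          B * (1 + 2 * (c + 3)) := by
        rw [abs_mul]
        apply mul_le_mul (hSSB _ habs3) ?_ (abs_nonneg _) (by linarith)
        rw [abs_of_nonneg (by positivity)]
        nlinarith [Real.exp_pos (-L), hE1, hc0]
      have h2 := neg_abs_le (SS (2 * k * P) * (1 + 2 * (c + 3) * Real.exp (-L)))
      nlinarith [h1, h2]
    linarith [hLHS, hchain, hRHS1]

end NBaux

/-- `χ_{8p}(n)`: the Kronecker symbol `(8p/n)`. Since `8p ≡ 0 (mod 4)`, Mathlib's Jacobi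
symbol `J(8p | n)` agrees with the Kronecker symbol `(8p/n)` for all `n ≥ 1`. -/
def chi8p (p n : ℕ) : ℤ := jacobiSym (8 * p) n

/-- `α_0 = log 2 / log X` and `α_i = 20^{i-1}/(log log X)²` for `i ≥ 1`. -/
noncomputable def alphaP (X : ℝ) : ℕ → ℝ
  | 0 => Real.log 2 / Real.log X
  | i + 1 => 20 ^ i / (Real.log (Real.log X)) ^ 2

/-- `𝓘 = 1 + max {i : α_i ≤ 10^{-M}}`. -/
noncomputable def bigI (M : ℕ) (X : ℝ) : ℕ :=
  1 + sSup {i : ℕ | alphaP X i ≤ ((10 : ℝ) ^ M)⁻¹}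

/-- `E_y(x) = ∑_{j=0}^{2⌈y⌉} x^j/j!`. -/
noncomputable def Efun (y x : ℝ) : ℝ :=
  ∑ j ∈ Finset.range (2 * ⌈y⌉₊ + 1), x ^ j / (j.factorial : ℝ)

/-- `𝓟_i(p) = ∑_{X^{α_{i-1}} < q ≤ X^{α_i}, q prime} χ_{8p}(q)/√q`. -/
noncomputable def Pfun (X : ℝ) (p i : ℕ) : ℝ :=
  ∑ q ∈ (Finset.range (⌊X ^ alphaP X i⌋₊ + 1)).filter
      (fun q : ℕ => q.Prime ∧ X ^ alphaP X (i - 1) < (q : ℝ)),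
    (chi8p p q : ℝ) / Real.sqrt q

/-- The length parameter `⌈e² k α_i^{-3/4}⌉`. -/
noncomputable def lenP (k X : ℝ) (i : ℕ) : ℕ :=
  ⌈Real.exp 2 * k * alphaP X i ^ (-(3 : ℝ) / 4)⌉₊

/-- `𝓝_i(p, a) = E_{e²k α_i^{-3/4}}(a 𝓟_i(p))`. -/
noncomputable def Nfun (k X : ℝ) (p i : ℕ) (a : ℝ) : ℝ :=
  Efun (Real.exp 2 * k * alphaP X i ^ (-(3 : ℝ) / 4)) (a * Pfun X p i)

/-- `𝓝(p, a) = ∏_{i=1}^{𝓘} 𝓝_i(p, a)`. -/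
noncomputable def NNfun (k : ℝ) (M : ℕ) (X : ℝ) (p : ℕ) (a : ℝ) : ℝ :=
  ∏ i ∈ Finset.Icc 1 (bigI M X), Nfun k X p i a

/-- `𝓠_i(p, k) = (12 max(9, 36k²) 𝓟_i(p) / ⌈e²k α_i^{-3/4}⌉)^{2⌈e²k α_i^{-3/4}⌉}`. -/
noncomputable def Qfun (k X : ℝ) (p i : ℕ) : ℝ :=
  (12 * max 9 (36 * k ^ 2) * Pfun X p i / (lenP k X i : ℝ)) ^ (2 * lenP k X i)

/-- For `0 < k < 1/2` there is an absolute constant `C` such that for large `X`, every odd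
prime `p` and `1 ≤ i ≤ 𝓘`:
`𝓝_i(p,2k−1)^{2(2−3k)/(1−2k)} 𝓝_i(p,2−2k)² ≤ 𝓝_i(p,2k)(1 + C e^{−e²kα_i^{−3/4}}) + 𝓠_i(p,k)^{r_k}`. -/
theorem N_bound_small_k (k : ℝ) (hk0 : 0 < k) (hk : k < 1 / 2) :
    ∃ C : ℝ, 0 < C ∧ ∃ M₀ : ℕ, ∀ M : ℕ, M₀ ≤ M → ∃ X₀ : ℝ, ∀ X : ℝ, X₀ ≤ X →
      ∀ p : ℕ, p.Prime → p ≠ 2 → ∀ i : ℕ, 1 ≤ i → i ≤ bigI M X →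
        Nfun k X p i (2 * k - 1) ^ (2 * (2 - 3 * k) / (1 - 2 * k)) *
            Nfun k X p i (2 - 2 * k) ^ (2 : ℕ) ≤
          Nfun k X p i (2 * k) *
              (1 + C * Real.exp (-(Real.exp 2 * k * alphaP X i ^ (-(3 : ℝ) / 4)))) +
            Qfun k X p i ^ (3 + ⌈2 * (2 - 3 * k) / (1 - 2 * k)⌉₊) := by
  have h12 : (0 : ℝ) < 1 - 2 * k := by linarith
  set c : ℝ := 2 * (2 - 3 * k) / (1 - 2 * k) with hcdef
  have hc0 : 0 < c := by rw [hcdef]; exact div_pos (by linarith) h12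
  refine ⟨2 * (c + 3), by positivity, ?_⟩
  set L₀ : ℝ := max 100 (c + 3) with hL₀def
  have hL₀100 : (100 : ℝ) ≤ L₀ := le_max_left _ _
  have hL₀c : c + 3 ≤ L₀ := le_max_right _ _
  have hek : 0 < Real.exp 2 * k := by positivity
  set A : ℝ := L₀ / (Real.exp 2 * k) with hAdef
  have hA0 : 0 < A := by apply div_pos (by linarith) hek
  obtain ⟨M₀, hM₀⟩ := exists_nat_gt (20 * A ^ ((4 : ℝ) / 3))
  refine ⟨M₀, fun M hM => ?_⟩
  refine ⟨Real.exp (Real.exp ((10 : ℝ) ^ M)), fun X hX => ?_⟩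
  intro p hp hp2 i hi1 hi2
  have hXpos : 0 < X := lt_of_lt_of_le (Real.exp_pos _) hX
  have hlog1 : Real.exp ((10 : ℝ) ^ M) ≤ Real.log X := (Real.le_log_iff_exp_le hXpos).2 hX
  have hlogpos : 0 < Real.log X := lt_of_lt_of_le (Real.exp_pos _) hlog1
  have hT : (10 : ℝ) ^ M ≤ Real.log (Real.log X) :=
    (Real.le_log_iff_exp_le hlogpos).2 hlog1
  set T : ℝ := Real.log (Real.log X) with hTdef
  have h10M1 : (1 : ℝ) ≤ (10 : ℝ) ^ M := one_le_pow₀ (by norm_num)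
  have hT1 : (1 : ℝ) ≤ T := le_trans h10M1 hT
  have halpha : ∀ m : ℕ, alphaP X (m + 1) = 20 ^ m / T ^ 2 := fun m => rfl
  -- the set S
  rw [bigI] at hi2
  set S : Set ℕ := {j : ℕ | alphaP X j ≤ ((10 : ℝ) ^ M)⁻¹} with hSdef
  have h1S : 1 ∈ S := by
    show alphaP X 1 ≤ ((10 : ℝ) ^ M)⁻¹
    rw [halpha 0, pow_zero]
    have hT2 : (10 : ℝ) ^ M ≤ T ^ 2 := by nlinarith [hT, hT1]
    have h1 := one_div_le_one_div_of_le (by positivity : (0 : ℝ) < (10 : ℝ) ^ M) hT2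
    simpa [one_div] using h1
  have hbdd : BddAbove S := by
    refine ⟨⌈T ^ 2⌉₊, fun j hj => ?_⟩
    rcases j with _ | m
    · exact Nat.zero_le _
    · have hj' : (20 : ℝ) ^ m / T ^ 2 ≤ ((10 : ℝ) ^ M)⁻¹ := by
        have := hj
        rwa [Set.mem_setOf_eq, halpha m] at this
      have hinv1 : ((10 : ℝ) ^ M)⁻¹ ≤ 1 := by
        rw [inv_le_one_iff₀]; right; exact h10M1
      have h20 : (20 : ℝ) ^ m ≤ T ^ 2 := by
        rw [div_le_iff₀ (by positivity)] at hj'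
        nlinarith [hj', hinv1, sq_nonneg T, hT1]
      have hcast : ((m + 1 : ℕ) : ℝ) ≤ (20 : ℝ) ^ m := by
        have h1 : m + 1 ≤ 20 ^ m := (Nat.lt_pow_self (n := m) (by norm_num : 1 < 20))
        calc ((m + 1 : ℕ) : ℝ) ≤ ((20 ^ m : ℕ) : ℝ) := by exact_mod_cast h1
          _ = (20 : ℝ) ^ m := by push_cast; ring
      have : ((m + 1 : ℕ) : ℝ) ≤ T ^ 2 := le_trans hcast h20
      exact_mod_cast le_trans this (Nat.le_ceil (T ^ 2))
  set J := sSup S with hJdef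
  have hJ1 : 1 ≤ J := le_csSup hbdd h1S
  have hJS : alphaP X J ≤ ((10 : ℝ) ^ M)⁻¹ := Nat.sSup_mem ⟨1, h1S⟩ hbdd
  obtain ⟨m, rfl⟩ : ∃ m, i = m + 1 := ⟨i - 1, by omega⟩
  obtain ⟨j0, hj0⟩ : ∃ j0, J = j0 + 1 := ⟨J - 1, by omega⟩
  have hmj : m ≤ j0 + 1 := by omega
  have hαJ : (20 : ℝ) ^ j0 / T ^ 2 ≤ ((10 : ℝ) ^ M)⁻¹ := by
    rw [hj0, halpha j0] at hJS; exact hJS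
  have hαi : alphaP X (m + 1) ≤ 20 * ((10 : ℝ) ^ M)⁻¹ := by
    rw [halpha m]
    calc (20 : ℝ) ^ m / T ^ 2 ≤ (20 : ℝ) ^ (j0 + 1) / T ^ 2 := by
          apply div_le_div_of_nonneg_right ?_ (by positivity)
          exact pow_le_pow_right₀ (by norm_num) hmj
      _ = 20 * ((20 : ℝ) ^ j0 / T ^ 2) := by rw [pow_succ]; ring
      _ ≤ 20 * ((10 : ℝ) ^ M)⁻¹ := by linarith [hαJ]
  have hαpos : 0 < alphaP X (m + 1) := by rw [halpha m]; positivity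
  -- M bound
  have hMM : (20 : ℝ) * A ^ ((4 : ℝ) / 3) ≤ (10 : ℝ) ^ M := by
    have h2 : M₀ < 10 ^ M₀ := Nat.lt_pow_self (n := M₀) (by norm_num : 1 < 10)
    have h3 : (10 : ℕ) ^ M₀ ≤ 10 ^ M := Nat.pow_le_pow_right (by norm_num) hM
    have h4 : (M₀ : ℝ) ≤ (10 : ℝ) ^ M := by
      calc (M₀ : ℝ) ≤ ((10 ^ M : ℕ) : ℝ) := by exact_mod_cast le_trans h2.le h3
        _ = (10 : ℝ) ^ M := by push_cast; ring
    linarith [hM₀]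
  have hA43 : (0 : ℝ) < A ^ ((4 : ℝ) / 3) := Real.rpow_pos_of_pos hA0 _
  have hαA : alphaP X (m + 1) ≤ A ^ (-(4 : ℝ) / 3) := by
    have h10 : (0 : ℝ) < (10 : ℝ) ^ M := by positivity
    have h2 : (20 : ℝ) * ((10 : ℝ) ^ M)⁻¹ ≤ (A ^ ((4 : ℝ) / 3))⁻¹ := by
      rw [inv_eq_one_div, inv_eq_one_div, mul_one_div, div_le_div_iff₀ h10 hA43]
      linarith [hMM]
    have h3 : A ^ (-(4 : ℝ) / 3) = (A ^ ((4 : ℝ) / 3))⁻¹ := by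
      rw [neg_div, Real.rpow_neg hA0.le]
    rw [h3]
    linarith [hαi, h2]
  have hA34 : A ≤ alphaP X (m + 1) ^ (-(3 : ℝ) / 4) := by
    have h5 := Real.rpow_le_rpow_of_nonpos hαpos hαA (by norm_num : -(3 : ℝ) / 4 ≤ 0)
    calc A = (A ^ (-(4 : ℝ) / 3)) ^ (-(3 : ℝ) / 4) := by
          rw [← Real.rpow_mul hA0.le]; norm_num
      _ ≤ alphaP X (m + 1) ^ (-(3 : ℝ) / 4) := h5
  have hL : L₀ ≤ Real.exp 2 * k * alphaP X (m + 1) ^ (-(3 : ℝ) / 4) := by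
    have h6 := mul_le_mul_of_nonneg_left hA34 hek.le
    calc L₀ = Real.exp 2 * k * A := by rw [hAdef]; field_simp
      _ ≤ _ := h6
  -- apply core
  have hL100 : (100 : ℝ) ≤ Real.exp 2 * k * alphaP X (m + 1) ^ (-(3 : ℝ) / 4) :=
    le_trans hL₀100 hL
  have hLc : c + 3 ≤ Real.exp 2 * k * alphaP X (m + 1) ^ (-(3 : ℝ) / 4) :=
    le_trans hL₀c hL
  have hcore := core_ineq k c hk0 hk hcdef
    (Real.exp 2 * k * alphaP X (m + 1) ^ (-(3 : ℝ) / 4)) hL100 hLc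
    (Pfun X p (m + 1)) (lenP k X (m + 1))
    (by rw [lenP]; exact Nat.le_ceil _)
  simp only [Nfun, Efun, Qfun, lenP] at *
  exact hcore
end

section
/- With the Harper-type parameters below, for every real number α, every large X, and every odd prime p, one has 𝓝(p, α) · 𝓝(p, −α) ≥ 1. -/
open Filter Finset

noncomputable def Spoly (m : ℕ) (x : ℝ) : ℝ := ∑ j ∈ Finset.range m, x ^ j / (j.factorial : ℝ)

lemma hasDerivAt_Spoly (m : ℕ) (x : ℝ) : HasDerivAt (Spoly (m+1)) (Spoly m x) x := by
  have h : ∀ j ∈ Finset.range (m+1),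
      HasDerivAt (fun y : ℝ => y ^ j / (j.factorial : ℝ)) ((j : ℝ) * x ^ (j-1) / (j.factorial : ℝ)) x :=
    fun j _ => (hasDerivAt_pow j x).div_const _
  have hsum := HasDerivAt.fun_sum h
  have heq : ∑ j ∈ Finset.range (m+1), (j : ℝ) * x ^ (j-1) / (j.factorial : ℝ) = Spoly m x := by
    rw [Finset.sum_range_succ']
    simp only [Nat.cast_zero, zero_mul, Nat.factorial_zero, Nat.cast_one, zero_div, add_zero]
    unfold Spoly
    refine Finset.sum_congr rfl fun j _ => ?_
    rw [Nat.factorial_succ]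
    have hj : (j.factorial : ℝ) ≠ 0 := Nat.cast_ne_zero.mpr j.factorial_ne_zero
    push_cast
    field_simp
  rw [heq] at hsum
  exact hsum

lemma Spoly_zero (m : ℕ) : Spoly (m+1) 0 = 1 := by
  unfold Spoly
  rw [Finset.sum_range_succ']
  simp [pow_succ]

lemma key (n : ℕ) (x : ℝ) :
    1 ≤ (∑ j ∈ Finset.range (2*n+1), x ^ j / (j.factorial : ℝ)) *
        (∑ j ∈ Finset.range (2*n+1), (-x) ^ j / (j.factorial : ℝ)) := by
  suffices h : ∀ y : ℝ, 0 ≤ y → 1 ≤ Spoly (2*n+1) y * Spoly (2*n+1) (-y) by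
    rcases le_total 0 x with hx | hx
    · exact h x hx
    · have := h (-x) (by linarith)
      rw [neg_neg] at this
      calc 1 ≤ Spoly (2*n+1) (-x) * Spoly (2*n+1) x := this
        _ = _ := mul_comm _ _
  intro y hy
  set g : ℝ → ℝ := fun z => Spoly (2*n+1) z * Spoly (2*n+1) (-z) with hg
  have hd : ∀ z : ℝ, HasDerivAt g
      (Spoly (2*n) z * Spoly (2*n+1) (-z) + Spoly (2*n+1) z * (Spoly (2*n) (-z) * (-1))) z := by
    intro z
    have h1 := hasDerivAt_Spoly (2*n) z
    have h2 : HasDerivAt (fun z : ℝ => Spoly (2*n+1) (-z)) (Spoly (2*n) (-z) * (-1)) z :=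
      (hasDerivAt_Spoly (2*n) (-z)).comp z (hasDerivAt_neg z)
    exact h1.mul h2
  have hderiv : ∀ z : ℝ, deriv g z =
      z ^ (2*n) / ((2*n).factorial : ℝ) * (Spoly (2*n) z - Spoly (2*n) (-z)) := by
    intro z
    rw [(hd z).deriv]
    have e1 : Spoly (2*n+1) z = Spoly (2*n) z + z ^ (2*n) / ((2*n).factorial : ℝ) := by
      unfold Spoly; rw [Finset.sum_range_succ]
    have e2 : Spoly (2*n+1) (-z) = Spoly (2*n) (-z) + z ^ (2*n) / ((2*n).factorial : ℝ) := by
      unfold Spoly; rw [Finset.sum_range_succ, (Even.neg_pow (even_two_mul n) z)]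
    rw [e1, e2]; ring
  have hmono : MonotoneOn g (Set.Ici (0:ℝ)) := by
    apply monotoneOn_of_deriv_nonneg (convex_Ici 0)
    · exact fun z _ => ((hd z).differentiableAt.continuousAt).continuousWithinAt
    · intro z _
      exact ((hd z).differentiableAt).differentiableWithinAt
    · intro z hz
      rw [interior_Ici] at hz
      rw [hderiv z]
      apply mul_nonneg
      · exact div_nonneg (pow_nonneg hz.le _) (by positivity)
      · rw [sub_nonneg]
        unfold Spoly
        apply Finset.sum_le_sum
        intro j _
        have hfac : (0:ℝ) ≤ (j.factorial : ℝ) := by positivity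
        apply div_le_div_of_nonneg_right ?_ hfac
        calc (-z) ^ j ≤ |(-z) ^ j| := le_abs_self _
          _ = |z| ^ j := by rw [abs_pow, abs_neg]
          _ = z ^ j := by rw [abs_of_nonneg hz.le]
  have h0 : g 0 = 1 := by
    simp only [hg, neg_zero, Spoly_zero, mul_one]
  calc (1:ℝ) = g 0 := h0.symm
    _ ≤ g y := hmono (by simp) (by exact hy) hy

/-- For every real `a`, large `X` and odd prime `p`, `𝓝(p, a) 𝓝(p, −a) ≥ 1`. -/
theorem N_product_ge_one (k : ℝ) (hk0 : 0 < k) (hkne : k ≠ 1 / 2) :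
    ∃ M₀ : ℕ, ∀ M : ℕ, M₀ ≤ M → ∃ X₀ : ℝ, ∀ X : ℝ, X₀ ≤ X →
      ∀ p : ℕ, p.Prime → p ≠ 2 → ∀ a : ℝ,
        1 ≤ NNfun k M X p a * NNfun k M X p (-a) := by
  refine ⟨0, fun M _ => ⟨0, fun X _ p _ _ a => ?_⟩⟩
  unfold NNfun
  rw [← Finset.prod_mul_distrib]
  calc (1:ℝ) = ∏ _i ∈ Finset.Icc 1 (bigI M X), (1:ℝ) := by simp
    _ ≤ _ := Finset.prod_le_prod (fun i _ => zero_le_one) ?_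
  intro i _
  unfold Nfun Efun
  have hneg : (-a) * Pfun X p i = -(a * Pfun X p i) := by ring
  rw [hneg]
  exact key _ _
end
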